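/- arXiv:1412.3026 — 2 statements merged into one kernel-verified Lean document; each statement's English description precedes it below -/
import Mathlib

section
/- For every positive integer n, every a, λ ∈ ℂ and every k with 1 ≤ k ≤ n+1, the principal minors satisfy the four-term recurrence Δ^{(k)}(a,λ) = −λ·Δ^{(k−1)}(a,λ) − (k−1)(n−k+2)·a·Δ^{(k−2)}(a,λ) + (n−k+2)(n−k+3)(k−1)(k−2)·Δ^{(k−3)}(a,λ). In particular Sp_n(a,λ) = Δ^{(n+1)}(a,λ) is computed by this recursion. -/
/-- The `(n+1) × (n+1)` matrix `M_n^{(a)}` of the operator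
`T_n(y) = y'' - (x² - a) y' + n x y` in the monomial basis `1, x, …, xⁿ`. -/
def Mmat (n : ℕ) (a : ℂ) : Matrix (Fin (n + 1)) (Fin (n + 1)) ℂ :=
  Matrix.of fun i j =>
    if (j : ℕ) = (i : ℕ) + 1 then ((i : ℕ) + 1 : ℂ) * a
    else if (j : ℕ) = (i : ℕ) + 2 then ((i : ℕ) + 1 : ℂ) * ((i : ℕ) + 2 : ℂ)
    else if (i : ℕ) = (j : ℕ) + 1 then (n : ℂ) - (j : ℕ)
    else 0

/-- The `n`-th spectral polynomial `Sp_n(a, λ) = det (M_n^{(a)} - λ·Id)`. -/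
def Sp (n : ℕ) (a lam : ℂ) : ℂ :=
  Matrix.det (Mmat n a - lam • (1 : Matrix (Fin (n + 1)) (Fin (n + 1)) ℂ))

/-- `Δ^{(k)}(a, λ)`: the determinant of the top-left `k × k` submatrix of
`M_n^{(a)} - λ·Id` (for `k ≤ n+1`; junk value `0` otherwise), so `Δ^{(0)} = 1`.
Note that for the out-of-range indices `k-2, k-3` appearing in the recurrence below
for `k = 1, 2`, the corresponding coefficients `(k-1)` resp. `(k-1)(k-2)` vanish, so the
conventions `Δ^{(-1)} = Δ^{(-2)} = 0` are immaterial and truncated subtraction is faithful. -/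
noncomputable def Delta (n k : ℕ) (a lam : ℂ) : ℂ :=
  if h : k ≤ n + 1 then
    Matrix.det
      ((Mmat n a - lam • (1 : Matrix (Fin (n + 1)) (Fin (n + 1)) ℂ)).submatrix
        (fun i : Fin k => Fin.castLE h i) (fun j : Fin k => Fin.castLE h j))
  else 0


theorem succAbove_val {m : ℕ} (p : Fin (m+1)) (i : Fin m) :
    ((p.succAbove i) : ℕ) = if (i:ℕ) < (p:ℕ) then (i:ℕ) else (i:ℕ)+1 := by
  rw [Fin.succAbove]
  rcases lt_or_ge (i.castSucc) p with h | h
  · rw [if_pos h, if_pos (by simpa [Fin.lt_def] using h), Fin.coe_castSucc]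
  · rw [if_neg (not_lt.2 h), if_neg (by simpa [Fin.lt_def, Fin.le_def, not_lt] using h), Fin.val_succ]

noncomputable def gEnt (n : ℕ) (a lam : ℂ) (i j : ℕ) : ℂ :=
  if j = i + 1 then ((i:ℂ) + 1) * a
  else if j = i + 2 then ((i:ℂ) + 1) * ((i:ℂ) + 2)
  else if i = j + 1 then (n : ℂ) - (j : ℂ)
  else if i = j then -lam
  else 0

noncomputable def Dk (n : ℕ) (a lam : ℂ) (k : ℕ) : ℂ :=
  Matrix.det (Matrix.of fun i j : Fin k => gEnt n a lam (i:ℕ) (j:ℕ))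

lemma key (n m : ℕ) (a lam : ℂ) :
    Dk n a lam (m+4) = -lam * Dk n a lam (m+3)
      - ((m:ℂ)+3) * ((n:ℂ) - (m:ℂ) - 2) * a * Dk n a lam (m+2)
      + ((n:ℂ) - (m:ℂ) - 2) * ((n:ℂ) - (m:ℂ) - 1) * ((m:ℂ)+3) * ((m:ℂ)+2)
        * Dk n a lam (m+1) := by
  set A : Matrix (Fin (m+4)) (Fin (m+4)) ℂ :=
    Matrix.of fun i j : Fin (m+4) => gEnt n a lam (i:ℕ) (j:ℕ) with hA
  set L : Fin (m+4) := Fin.last (m+3) with hL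
  set j0 : Fin (m+4) := (Fin.last (m+2)).castSucc with hj0
  -- the minor C : delete last row, column m+2
  set C : Matrix (Fin (m+3)) (Fin (m+3)) ℂ := A.submatrix L.succAbove j0.succAbove with hC
  -- the minor D inside C
  set D : Matrix (Fin (m+2)) (Fin (m+2)) ℂ :=
    C.submatrix ((Fin.last (m+1)).castSucc).succAbove (Fin.last (m+2)).succAbove with hD
  -- determinant of D
  have hDdet : D.det = ((n:ℂ) - (m:ℂ) - 1) * Dk n a lam (m+1) := by
    rw [Matrix.det_succ_row D (Fin.last (m+1)), Fin.sum_univ_castSucc]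
    have hz : ∀ c : Fin (m+1),
        D (Fin.last (m+1)) c.castSucc = 0 := by
      intro c
      show gEnt n a lam _ _ = 0
      rw [gEnt]
      have h1 : ((L.succAbove (((Fin.last (m+1)).castSucc).succAbove (Fin.last (m+1)))) : ℕ) = m+2 := by
        simp only [succAbove_val, hL, hj0, Fin.val_last, Fin.coe_castSucc]
        split_ifs <;> omega
      have h2 : ((j0.succAbove ((Fin.last (m+2)).succAbove c.castSucc)) : ℕ) = (c:ℕ) := by
        simp only [succAbove_val, hL, hj0, Fin.val_last, Fin.coe_castSucc]
        split_ifs <;> omega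
      rw [h1, h2]
      rw [if_neg (by omega), if_neg (by omega), if_neg (by omega), if_neg (by omega)]
    rw [Finset.sum_eq_zero (fun c _ => by rw [hz c, mul_zero, zero_mul]), zero_add]
    have hsign : ((-1:ℂ)) ^ ((Fin.last (m+1) : ℕ) + (Fin.last (m+1) : ℕ)) = 1 :=
      Even.neg_one_pow ⟨m+1, by simp⟩
    have hent : D (Fin.last (m+1)) (Fin.last (m+1)) = (n:ℂ) - ((m:ℕ):ℂ) - 1 := by
      show gEnt n a lam _ _ = _
      have h1 : ((L.succAbove (((Fin.last (m+1)).castSucc).succAbove (Fin.last (m+1)))) : ℕ) = m+2 := by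
        simp only [succAbove_val, hL, hj0, Fin.val_last, Fin.coe_castSucc]
        split_ifs <;> omega
      have h2 : ((j0.succAbove ((Fin.last (m+2)).succAbove (Fin.last (m+1)))) : ℕ) = m+1 := by
        simp only [succAbove_val, hL, hj0, Fin.val_last, Fin.coe_castSucc]
        split_ifs <;> omega
      rw [h1, h2, gEnt]
      rw [if_neg (by omega), if_neg (by omega), if_pos (by omega)]
      push_cast; ring
    have hmin : (D.submatrix (Fin.last (m+1)).succAbove (Fin.last (m+1)).succAbove)
        = Matrix.of fun i j : Fin (m+1) => gEnt n a lam (i:ℕ) (j:ℕ) := by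
      ext i j
      simp only [Matrix.submatrix_apply, hD, hC, hA, Matrix.of_apply]
      congr 1 <;>
        (simp only [succAbove_val, hL, hj0, Fin.val_last, Fin.coe_castSucc]
         split_ifs <;> omega)
    rw [hsign, hent, hmin]
    rw [show (Matrix.of fun i j : Fin (m+1) => gEnt n a lam (i:ℕ) (j:ℕ)).det = Dk n a lam (m+1) from rfl]
    ring
  -- determinant of C
  have hCdet : C.det = ((m:ℂ)+3) * a * Dk n a lam (m+2)
      - ((m:ℂ)+2)*((m:ℂ)+3)*((n:ℂ)-(m:ℂ)-1) * Dk n a lam (m+1) := by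
    rw [Matrix.det_succ_column C (Fin.last (m+2)), Fin.sum_univ_castSucc, Fin.sum_univ_castSucc]
    have hz : ∀ i : Fin (m+1), C (i.castSucc.castSucc) (Fin.last (m+2)) = 0 := by
      intro i
      show gEnt n a lam _ _ = 0
      have h1 : ((L.succAbove i.castSucc.castSucc) : ℕ) = (i:ℕ) := by
        simp only [succAbove_val, hL, hj0, Fin.val_last, Fin.coe_castSucc]
        split_ifs <;> omega
      have h2 : ((j0.succAbove (Fin.last (m+2))) : ℕ) = m+3 := by
        simp only [succAbove_val, hL, hj0, Fin.val_last, Fin.coe_castSucc]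
        split_ifs <;> omega
      rw [h1, h2, gEnt]
      rw [if_neg (by omega), if_neg (by omega), if_neg (by omega), if_neg (by omega)]
    rw [Finset.sum_eq_zero (fun c _ => by rw [hz c, mul_zero, zero_mul]), zero_add]
    -- term i = m+1
    have hsign1 : ((-1:ℂ)) ^ (((Fin.last (m+1)).castSucc : ℕ) + (Fin.last (m+2) : ℕ)) = -1 :=
      Odd.neg_one_pow ⟨m+1, by simp; ring⟩
    have hent1 : C ((Fin.last (m+1)).castSucc) (Fin.last (m+2)) = ((m:ℂ)+2)*((m:ℂ)+3) := by
      show gEnt n a lam _ _ = _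
      have h1 : ((L.succAbove (Fin.last (m+1)).castSucc) : ℕ) = m+1 := by
        simp only [succAbove_val, hL, hj0, Fin.val_last, Fin.coe_castSucc]
        split_ifs <;> omega
      have h2 : ((j0.succAbove (Fin.last (m+2))) : ℕ) = m+3 := by
        simp only [succAbove_val, hL, hj0, Fin.val_last, Fin.coe_castSucc]
        split_ifs <;> omega
      rw [h1, h2, gEnt]
      rw [if_neg (by omega), if_pos (by omega)]
      push_cast; ring
    -- term i = last
    have hsign2 : ((-1:ℂ)) ^ ((Fin.last (m+2) : ℕ) + (Fin.last (m+2) : ℕ)) = 1 :=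
      Even.neg_one_pow ⟨m+2, by simp⟩
    have hent2 : C (Fin.last (m+2)) (Fin.last (m+2)) = ((m:ℂ)+3)*a := by
      show gEnt n a lam _ _ = _
      have h1 : ((L.succAbove (Fin.last (m+2))) : ℕ) = m+2 := by
        simp only [succAbove_val, hL, hj0, Fin.val_last, Fin.coe_castSucc]
        split_ifs <;> omega
      have h2 : ((j0.succAbove (Fin.last (m+2))) : ℕ) = m+3 := by
        simp only [succAbove_val, hL, hj0, Fin.val_last, Fin.coe_castSucc]
        split_ifs <;> omega
      rw [h1, h2, gEnt]
      rw [if_pos (by omega)]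
      push_cast; ring
    have hmin2 : (C.submatrix (Fin.last (m+2)).succAbove (Fin.last (m+2)).succAbove)
        = Matrix.of fun i j : Fin (m+2) => gEnt n a lam (i:ℕ) (j:ℕ) := by
      ext i j
      simp only [Matrix.submatrix_apply, hC, hA, Matrix.of_apply]
      congr 1 <;>
        (simp only [succAbove_val, hL, hj0, Fin.val_last, Fin.coe_castSucc]
         split_ifs <;> omega)
    have hDmatch : (C.submatrix ((Fin.last (m+1)).castSucc).succAbove (Fin.last (m+2)).succAbove) = D := rfl
    rw [hsign1, hsign2, hent1, hent2, hDmatch, hDdet, hmin2]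
    rw [show (Matrix.of fun i j : Fin (m+2) => gEnt n a lam (i:ℕ) (j:ℕ)).det = Dk n a lam (m+2) from rfl]
    ring
  -- main expansion
  have hmain : Dk n a lam (m+4) = A.det := rfl
  rw [hmain, Matrix.det_succ_row A L, Fin.sum_univ_castSucc, Fin.sum_univ_castSucc]
  have hz : ∀ j : Fin (m+2), A L (j.castSucc.castSucc) = 0 := by
    intro j
    show gEnt n a lam _ _ = 0
    simp only [hL, Fin.val_last, Fin.coe_castSucc]
    rw [gEnt]
    rw [if_neg (by omega), if_neg (by omega), if_neg (by omega), if_neg (by omega)]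
  rw [Finset.sum_eq_zero (fun c _ => by rw [hz c, mul_zero, zero_mul]), zero_add]
  have hsign1 : ((-1:ℂ)) ^ ((L : ℕ) + ((Fin.last (m+2)).castSucc : ℕ)) = -1 :=
    Odd.neg_one_pow ⟨m+2, by simp [hL]; ring⟩
  have hent1 : A L ((Fin.last (m+2)).castSucc) = (n:ℂ) - (m:ℂ) - 2 := by
    show gEnt n a lam _ _ = _
    simp only [hL, Fin.val_last, Fin.coe_castSucc]
    rw [gEnt]
    rw [if_neg (by omega), if_neg (by omega), if_pos (by omega)]
    push_cast; ring
  have hsign2 : ((-1:ℂ)) ^ ((L : ℕ) + (L : ℕ)) = 1 :=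
    Even.neg_one_pow ⟨m+3, by simp [hL]⟩
  have hent2 : A L L = -lam := by
    show gEnt n a lam _ _ = _
    simp only [hL, Fin.val_last]
    rw [gEnt]
    rw [if_neg (by omega), if_neg (by omega), if_neg (by omega), if_pos rfl]
  have hmin2 : (A.submatrix L.succAbove L.succAbove)
      = Matrix.of fun i j : Fin (m+3) => gEnt n a lam (i:ℕ) (j:ℕ) := by
    ext i j
    simp only [Matrix.submatrix_apply, hA, Matrix.of_apply]
    congr 1 <;>
      (simp only [succAbove_val, hL, hj0, Fin.val_last, Fin.coe_castSucc]
       split_ifs <;> omega)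
  have hCmatch : (A.submatrix L.succAbove ((Fin.last (m+2)).castSucc).succAbove) = C := rfl
  rw [hsign1, hsign2, hent1, hent2, hCmatch, hCdet, hmin2]
  rw [show (Matrix.of fun i j : Fin (m+3) => gEnt n a lam (i:ℕ) (j:ℕ)).det = Dk n a lam (m+3) from rfl]
  ring

lemma Dk0 (n : ℕ) (a lam : ℂ) : Dk n a lam 0 = 1 := by
  simp [Dk, Matrix.det_fin_zero]

lemma Dk1 (n : ℕ) (a lam : ℂ) : Dk n a lam 1 = -lam := by
  simp [Dk, Matrix.det_fin_one, gEnt]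

lemma Dk2 (n : ℕ) (a lam : ℂ) : Dk n a lam 2 = lam^2 - (n:ℂ) * a := by
  simp [Dk, Matrix.det_fin_two, gEnt]
  ring

lemma Delta_eq (n : ℕ) (a lam : ℂ) (k : ℕ) (h : k ≤ n+1) :
    Delta n k a lam = Dk n a lam k := by
  rw [Delta, dif_pos h, Dk]
  congr 1
  ext i j
  simp only [Matrix.submatrix_apply, Matrix.sub_apply, Matrix.smul_apply, Matrix.one_apply,
    Mmat, Matrix.of_apply, gEnt, smul_eq_mul, Fin.coe_castLE, Fin.ext_iff]
  split_ifs <;> (try omega) <;> ring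

/-- The principal minors of `M_n^{(a)} - λ·Id` satisfy the four-term recurrence
`Δ^{(k)} = -λ·Δ^{(k-1)} - (k-1)(n-k+2)·a·Δ^{(k-2)} + (n-k+2)(n-k+3)(k-1)(k-2)·Δ^{(k-3)}`
for `1 ≤ k ≤ n+1`; in particular `Sp_n(a,λ) = Δ^{(n+1)}(a,λ)`. -/
theorem Delta_four_term_recurrence (n : ℕ) (hn : 0 < n) (a lam : ℂ) :
    (∀ k : ℕ, 1 ≤ k → k ≤ n + 1 →
      Delta n k a lam =
        -lam * Delta n (k - 1) a lam -
          ((k : ℂ) - 1) * ((n : ℂ) - k + 2) * a * Delta n (k - 2) a lam +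
          ((n : ℂ) - k + 2) * ((n : ℂ) - k + 3) * ((k : ℂ) - 1) * ((k : ℂ) - 2) *
            Delta n (k - 3) a lam) ∧
    Sp n a lam = Delta n (n + 1) a lam := by
  constructor
  · intro k hk1 hk2
    match k, hk1 with
    | 1, _ =>
      rw [Delta_eq n a lam 1 hk2, Delta_eq n a lam 0 (by omega), Dk1, Dk0]
      norm_num
    | 2, _ =>
      rw [Delta_eq n a lam 2 hk2, Delta_eq n a lam 1 (by omega),
        Delta_eq n a lam 0 (by omega), Dk2, Dk1, Dk0]
      ring
    | 3, _ =>
      rw [Delta_eq n a lam 3 hk2, Delta_eq n a lam 2 (by omega),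
        Delta_eq n a lam 1 (by omega), Delta_eq n a lam 0 (by omega),
        Dk2, Dk1, Dk0]
      rw [show Dk n a lam 3 = (Matrix.of fun i j : Fin 3 => gEnt n a lam (i:ℕ) (j:ℕ)).det from rfl,
        Matrix.det_fin_three]
      simp [gEnt]
      ring
    | (m+4), _ =>
      rw [show m+4-1 = m+3 from rfl, show m+4-2 = m+2 from rfl, show m+4-3 = m+1 from rfl,
        Delta_eq n a lam (m+4) hk2, Delta_eq n a lam (m+3) (by omega),
        Delta_eq n a lam (m+2) (by omega), Delta_eq n a lam (m+1) (by omega), key]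
      push_cast
      ring
  · rw [Sp, Delta, dif_pos (le_refl (n+1)),
      show (fun i : Fin (n+1) => Fin.castLE (le_refl (n+1)) i) = id from
        funext fun i => Fin.ext rfl,
      Matrix.submatrix_id_id]
end

section
/- There exists a sequence (Y_n)_{n≥0} of polynomials in ℚ[t] with Y_0 = 1, Y_1 = t, satisfying for all n ≥ 1 the Yablonskii–Vorob'ev recurrence Y_{n+1}·Y_{n−1} = t·Y_n² − 4·(Y_n·Y_n'' − (Y_n')²); in other words, although this recurrence a priori only defines Y_{n+1} as a rational function, each Y_{n+1} is in fact a polynomial. Moreover, for every such sequence, deg Y_n = n(n+1)/2 for all n ≥ 0. -/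
open Polynomial

/-- A sequence of rational polynomials satisfying the Yablonskii–Vorob'ev recurrence
`Y_{n+1}·Y_{n−1} = t·Y_n² − 4·(Y_n·Y_n'' − (Y_n')²)` with `Y₀ = 1`, `Y₁ = t`. -/
def IsYablonskiiVorobev (Y : ℕ → Polynomial ℚ) : Prop :=
  Y 0 = 1 ∧ Y 1 = X ∧
    ∀ n : ℕ, 1 ≤ n →
      Y (n + 1) * Y (n - 1) =
        X * (Y n) ^ 2 - 4 * (Y n * derivative (derivative (Y n)) - (derivative (Y n)) ^ 2)

noncomputable def YV : ℕ → Polynomial ℚ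
  | 0 => 1
  | 1 => X
  | (n+2) =>
      (X * (YV (n+1)) ^ 2 -
        4 * (YV (n+1) * derivative (derivative (YV (n+1))) - (derivative (YV (n+1))) ^ 2)) /ₘ YV n

def T (n : ℕ) : ℕ := n * (n + 1) / 2

lemma two_T (n : ℕ) : 2 * T n = n * (n + 1) := by
  unfold T
  exact Nat.mul_div_cancel' (Nat.even_mul_succ_self n).two_dvd

lemma T_succ (n : ℕ) : T (n+1) = T n + (n+1) := by
  have h1 := two_T n; have h2 := two_T (n+1)
  refine Nat.eq_of_mul_eq_mul_left two_pos ?_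
  calc 2 * T (n+1) = (n+1)*(n+1+1) := h2
    _ = n*(n+1) + 2*(n+1) := by ring
    _ = 2*T n + 2*(n+1) := by rw [h1]
    _ = 2*(T n + (n+1)) := by ring

lemma YV_two : YV 2 = X ^ 3 + 4 := by
  show (X * (X:ℚ[X]) ^ 2 - 4 * (X * derivative (derivative X) - (derivative X) ^ 2)) /ₘ YV 0
      = X ^ 3 + 4
  rw [show (YV 0 : ℚ[X]) = 1 from rfl, divByMonic_one]
  simp only [derivative_X, derivative_one]
  ring


lemma F_monic {p : ℚ[X]} (hp : p.Monic) :
    (X * p ^ 2 - 4 * (p * derivative (derivative p) - (derivative p) ^ 2)).Monic ∧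
    (X * p ^ 2 - 4 * (p * derivative (derivative p) - (derivative p) ^ 2)).natDegree
      = 2 * p.natDegree + 1 := by
  set d := p.natDegree with hd
  set q : ℚ[X] := 4 * (p * derivative (derivative p) - (derivative p) ^ 2) with hq
  have hXp : (X * p ^ 2).Monic := monic_X.mul (hp.pow 2)
  have hdeg : (X * p ^ 2).natDegree = 2 * d + 1 := by
    rw [natDegree_mul X_ne_zero (pow_ne_zero 2 hp.ne_zero), natDegree_X, natDegree_pow]
    omega
  have hpd : degree p ≤ (d : ℕ) := degree_le_natDegree
  have hqle : degree q ≤ ((2 * d : ℕ) : WithBot ℕ) := by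
    have h4 : degree (4 : ℚ[X]) ≤ 0 := by
      rw [← map_ofNat (C : ℚ →+* ℚ[X]) 4]; exact degree_C_le
    have hdd : degree (derivative (derivative p)) ≤ (d : ℕ) :=
      (degree_derivative_le.trans degree_derivative_le).trans hpd
    have hd1 : degree (derivative p) ≤ (d : ℕ) := degree_derivative_le.trans hpd
    have hsub : degree (p * derivative (derivative p) - (derivative p) ^ 2)
        ≤ ((2 * d : ℕ) : WithBot ℕ) := by
      refine (degree_sub_le _ _).trans (max_le ?_ ?_)
      · refine (degree_mul_le _ _).trans ?_
        calc degree p + degree (derivative (derivative p)) ≤ (d : ℕ) + (d : ℕ) :=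
              add_le_add hpd hdd
          _ = ((2 * d : ℕ) : WithBot ℕ) := by rw [← Nat.cast_add]; norm_num; ring_nf
      · rw [sq]
        refine (degree_mul_le _ _).trans ?_
        calc degree (derivative p) + degree (derivative p) ≤ (d : ℕ) + (d : ℕ) :=
              add_le_add hd1 hd1
          _ = ((2 * d : ℕ) : WithBot ℕ) := by rw [← Nat.cast_add]; norm_num; ring_nf
    calc degree q ≤ degree (4 : ℚ[X]) + degree (p * derivative (derivative p) - (derivative p) ^ 2) :=
          degree_mul_le _ _
      _ ≤ 0 + ((2 * d : ℕ) : WithBot ℕ) := add_le_add h4 hsub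
      _ = ((2 * d : ℕ) : WithBot ℕ) := zero_add _
  have hlt : degree (-q) < degree (X * p ^ 2) := by
    rw [degree_neg, degree_eq_natDegree hXp.ne_zero, hdeg]
    exact lt_of_le_of_lt hqle (by exact_mod_cast Nat.lt_succ_self (2 * d))
  constructor
  · have := hXp.add_of_left hlt
    rwa [← sub_eq_add_neg] at this
  · have hdeq : degree (X * p ^ 2 + -q) = degree (X * p ^ 2) :=
      degree_add_eq_left_of_degree_lt hlt
    rw [← sub_eq_add_neg] at hdeq
    rw [natDegree_eq_of_degree_eq hdeq, hdeg]

set_option maxHeartbeats 1600000 in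
lemma YV_inv : ∀ n : ℕ, 1 ≤ n →
    (YV (n+1) * YV (n-1) =
      X * (YV n) ^ 2 - 4 * (YV n * derivative (derivative (YV n)) - (derivative (YV n)) ^ 2)) ∧
    (derivative (YV (n+1)) * YV (n-1) - YV (n+1) * derivative (YV (n-1))
      = (2 * (n : ℚ[X]) + 1) * (YV n) ^ 2) ∧
    IsCoprime (YV (n-1)) (YV n) ∧ IsCoprime (YV n) (YV (n+1)) ∧
    (∃ g : ℚ[X], X * (YV (n-1)) ^ 2 -
        4 * (YV (n-1) * derivative (derivative (YV (n-1))) - (derivative (YV (n-1))) ^ 2)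
        = YV n * g) ∧
    (YV n).Monic ∧ (YV (n+1)).Monic ∧ (YV n).natDegree = T n ∧ (YV (n+1)).natDegree = T (n+1) := by
  intro n hn
  induction n, hn using Nat.le_induction with
  | base =>
    have h0 : YV 0 = 1 := rfl
    have h1 : YV 1 = X := rfl
    refine ⟨?_, ?_, ?_, ?_, ?_, ?_, ?_, ?_, ?_⟩
    · rw [show (1:ℕ)-1 = 0 from rfl, h0, h1, YV_two]
      simp only [derivative_X, derivative_one]
      ring
    · rw [show (1:ℕ)-1 = 0 from rfl, h0, h1, YV_two]
      simp only [derivative_add, derivative_X_pow, derivative_ofNat, derivative_one, Nat.cast_one,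
        Nat.cast_ofNat, map_ofNat]
      ring
    · rw [show (1:ℕ)-1 = 0 from rfl, h0]; exact isCoprime_one_left
    · rw [h1, YV_two]
      refine ⟨-(C (1/4 : ℚ) * X^2), C (1/4 : ℚ), ?_⟩
      have h4 : (C (1/4:ℚ)) * (4:ℚ[X]) = 1 := by
        rw [← map_ofNat (C : ℚ →+* ℚ[X]) 4, ← C_mul]; norm_num
      linear_combination h4
    · rw [show (1:ℕ)-1 = 0 from rfl, h0, h1]
      exact ⟨1, by simp⟩
    · rw [h1]; exact monic_X
    · rw [YV_two]; exact monic_X_pow_add_C (n := 3) (a := (4:ℚ)) (by norm_num)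
    · rw [h1, natDegree_X]; rfl
    · rw [YV_two, show ((4:ℚ[X]) = C 4) from (map_ofNat C 4).symm, natDegree_X_pow_add_C]; rfl
  | succ n hn ih =>
    simp only [Nat.add_sub_cancel]
    obtain ⟨h1, h2, hab, hbc, ⟨g, hg⟩, hMb, hMc, hdb, hdc⟩ := ih
    set a := YV (n-1) with ha
    set b := YV n with hb
    set c := YV (n+1) with hc
    set a1 := derivative a with ha1
    set a2 := derivative a1 with ha2
    set b1 := derivative b with hb1
    set b2 := derivative b1 with hb2
    set b3 := derivative b2 with hb3
    set b4 := derivative b3 with hb4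
    set c1 := derivative c with hc1
    set c2 := derivative c1 with hc2
    set c3 := derivative c2 with hc3
    set c4 := derivative c3 with hc4
    -- derivative expansions
    have hE3 : c1 * a + c * a1 = b^2 + 2*X*b*b1 + 4*b1*b2 - 4*b*b3 := by
      have hder := congrArg derivative h1
      simp only [derivative_mul, derivative_sub, derivative_add, derivative_X, derivative_pow,
        derivative_ofNat, Nat.cast_ofNat, map_ofNat, ← ha1, ← hb1, ← hb2, ← hb3] at hder
      linear_combination hder
    have hE5 : c2 * a + 2*c1*a1 + c*a2 = 4*b*b1 + 2*X*b1^2 + 2*X*b*b2 + 4*b2^2 - 4*b*b4 := by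
      have hder := congrArg derivative hE3
      simp only [derivative_mul, derivative_sub, derivative_add, derivative_X, derivative_pow,
        derivative_ofNat, Nat.cast_ofNat, map_ofNat, ← ha1, ← ha2, ← hb1, ← hb2, ← hb3, ← hb4] at hder
      linear_combination hder
    have hh2d : c2 * a - c * a2 = (2*(n:ℚ[X])+1) * (2*b*b1) := by
      have hder := congrArg derivative h2
      simp only [derivative_mul, derivative_sub, derivative_add, derivative_X, derivative_pow,
        derivative_ofNat, derivative_natCast, derivative_one, Nat.cast_ofNat, map_ofNat,
        ← ha1, ← ha2, ← hb1, ← hc1, ← hc2] at hder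
      linear_combination hder
    -- divisibility pieces
    have k1 : b ∣ c*a - 4*b1^2 := ⟨X*b - 4*b2, by linear_combination h1⟩
    have k2 : b ∣ 2*c*a1 - 4*b1*b2 :=
      ⟨b + 2*X*b1 - 4*b3 - (2*(n:ℚ[X])+1)*b, by linear_combination hE3 - h2⟩
    have k4 : b ∣ 2*c1*a - 4*b1*b2 :=
      ⟨b + 2*X*b1 - 4*b3 + (2*(n:ℚ[X])+1)*b, by linear_combination hE3 + h2⟩
    have k5 : b ∣ c2*a + 2*c1*a1 + c*a2 - 2*X*b1^2 - 4*b2^2 :=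
      ⟨4*b1 + 2*X*b2 - 4*b4, by linear_combination hE5⟩
    have k0 : b ∣ X*a^2 - 4*a*a2 + 4*a1^2 := ⟨g, by linear_combination hg⟩
    have kJ : b ∣ 4*(a*b1*b2 - 2*a1*b1^2) := by
      have hJ := dvd_sub (k1.mul_left (2*a1)) (k2.mul_left a)
      have e : (2*a1)*(c*a - 4*b1^2) - a*(2*c*a1 - 4*b1*b2) = 4*(a*b1*b2 - 2*a1*b1^2) := by
        ring
      rwa [e] at hJ
    have hdvd : b ∣ X*c^2 - 4*(c*c2 - c1^2) := by
      have key : a^4 * (X*c^2 - 4*(c*c2 - c1^2)) =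
          (4*(a*b1*b2 - 2*a1*b1^2)) * (4*(a*b1*b2 - 2*a1*b1^2) - 8*a*b1*b2)
          + (-4*a^3*c) * (c2*a + 2*c1*a1 + c*a2 - 2*X*b1^2 - 4*b2^2)
          + (4*a^2*b1*b2 + 4*a^2*a1*c + 2*a^3*c1) * (2*c1*a - 4*b1*b2)
          + (8*a^2*b1*b2) * (2*c*a1 - 4*b1*b2)
          + (16*a*a2*b1^2 - 16*a^2*b2^2 + 4*a^2*a2*c - 4*X*a^2*b1^2 + X*a^3*c) * (c*a - 4*b1^2)
          + (-16*b1^4) * (X*a^2 - 4*a*a2 + 4*a1^2) := by ring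
      have hb4 : b ∣ a^4 * (X*c^2 - 4*(c*c2 - c1^2)) := by
        rw [key]
        exact dvd_add (dvd_add (dvd_add (dvd_add (dvd_add
          (kJ.mul_right _) (k5.mul_left _)) (k4.mul_left _)) (k2.mul_left _))
          (k1.mul_left _)) (k0.mul_left _)
      exact (hab.symm.pow_right (n := 4)).dvd_of_dvd_mul_left hb4
    -- define d
    have hdef : YV (n+2) = (X*c^2 - 4*(c*c2 - c1^2)) /ₘ b := by
      rw [hc, hc1, hc2, hb]
      rfl
    set d := YV (n+2) with hdd0
    have hd : d * b = X*c^2 - 4*(c*c2 - c1^2) := by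
      have hmod := modByMonic_add_div (X*c^2 - 4*(c*c2 - c1^2)) b
      rw [(modByMonic_eq_zero_iff_dvd hMb).mpr hdvd, zero_add] at hmod
      rw [hdef, mul_comm]
      exact hmod
    -- monic and degree of d
    have hFc := F_monic hMc
    rw [← hc1, ← hc2] at hFc
    have hdb_ne : b ≠ 0 := hMb.ne_zero
    have hMdb : (d * b).Monic := by rw [hd]; exact hFc.1
    have hMd : d.Monic := Monic.of_mul_monic_right hMb hMdb
    have hd_ne : d ≠ 0 := hMd.ne_zero
    have hddeg : d.natDegree = T (n+2) := by
      have hnd := natDegree_mul hd_ne hdb_ne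
      rw [hd, hFc.2, hdc, hdb] at hnd
      have e1 := T_succ n; have e2 := T_succ (n+1)
      have e3 : T (n+1+1) = T (n+2) := rfl
      omega
    -- coprimality facts
    have hCunit : IsUnit (2*(n:ℚ[X])+1) := by
      have hC : (2*(n:ℚ[X])+1) = C (2*(n:ℚ)+1) := by
        simp only [map_add, map_mul, map_ofNat, map_one, C_eq_natCast]
      rw [hC]
      refine isUnit_C.mpr (isUnit_iff_ne_zero.mpr ?_)
      have : (0:ℚ) ≤ (n:ℚ) := Nat.cast_nonneg n
      intro hcon; nlinarith
    have hcb2 : IsCoprime c ((2*(n:ℚ[X])+1) * b^2) :=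
      (isCoprime_mul_unit_left_right hCunit c (b^2)).mpr (hbc.symm.pow_right)
    have hcc1a : IsCoprime c (c1 * a) := by
      have h' := hcb2.add_mul_left_right a1
      have e : (2*(n:ℚ[X])+1)*b^2 + c*a1 = c1*a := by linear_combination -h2
      rwa [e] at h'
    have hcc1 : IsCoprime c c1 := hcc1a.of_mul_right_left
    have hca : IsCoprime c a := hcc1a.of_mul_right_right
    have hcd : IsCoprime c d := by
      have h4u : IsUnit (4:ℚ[X]) := by
        rw [← map_ofNat (C : ℚ →+* ℚ[X]) 4]; exact isUnit_C.mpr (by norm_num)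
      have hcc2 : IsCoprime c (4*c1^2) :=
        (isCoprime_mul_unit_left_right h4u c (c1^2)).mpr (hcc1.pow_right)
      have h' := hcc2.add_mul_left_right (X*c - 4*c2)
      have e : 4*c1^2 + c*(X*c - 4*c2) = d*b := by linear_combination -hd
      rw [e] at h'
      exact h'.of_mul_right_left
    -- the V argument for the Wronskian relation
    set V := b*(c^2 + 2*X*c*c1 + 4*c1*c2 - 4*c*c3)
      - 2*b1*(X*c^2 - 4*(c*c2 - c1^2)) - (2*(n:ℚ[X])+3)*b*c^2 with hVdef
    have hdFc : derivative (X*c^2 - 4*(c*c2 - c1^2))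
        = c^2 + 2*X*c*c1 + 4*c1*c2 - 4*c*c3 := by
      simp only [derivative_mul, derivative_sub, derivative_add, derivative_X, derivative_pow,
        derivative_ofNat, Nat.cast_ofNat, map_ofNat, ← hc1, ← hc2, ← hc3]
      ring
    have hbV : b ∣ V := by
      refine ⟨(c^2 + 2*X*c*c1 + 4*c1*c2 - 4*c*c3) - 2*b1*d - (2*(n:ℚ[X])+3)*c^2, ?_⟩
      rw [hVdef]; linear_combination (2*b1)*hd
    have hJup : c ∣ b*c2 - 2*b1*c1 := by
      have h9 : a*(b*c2 - 2*b1*c1) = c*(a2*b - 2*a1*b1) := by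
        linear_combination b*hh2d - 2*b1*h2
      exact hca.dvd_of_dvd_mul_left ⟨a2*b - 2*a1*b1, h9⟩
    obtain ⟨W1, hW1⟩ := hJup
    have hcV : c ∣ V := by
      refine ⟨4*c1*W1 + (8*b1*c2 - 4*b*c3 - 2*b*c - 2*(n:ℚ[X])*b*c - 2*X*b1*c + 2*X*b*c1), ?_⟩
      rw [hVdef]; linear_combination 4*c1*hW1
    have hdV : derivative V =
        b*(4*c*c1 + 2*X*c1^2 + 2*X*c*c2 + 4*c2^2 - 4*c*c4)
        - b1*(c^2 + 2*X*c*c1 + 4*c1*c2 - 4*c*c3)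
        - 2*b2*(X*c^2 - 4*(c*c2 - c1^2))
        - (2*(n:ℚ[X])+3)*(b1*c^2 + 2*b*c*c1) := by
      rw [hVdef]
      simp only [derivative_mul, derivative_sub, derivative_add, derivative_X, derivative_pow,
        derivative_ofNat, derivative_natCast, derivative_one, Nat.cast_ofNat, map_ofNat,
        ← ha1, ← hb1, ← hb2, ← hc1, ← hc2, ← hc3, ← hc4]
      ring
    have hcdV : c ∣ derivative V := by
      have hc2cert : a^2 * (b*(4*c*c1 + 2*X*c1^2 + 2*X*c*c2 + 4*c2^2 - 4*c*c4)
          - b1*(c^2 + 2*X*c*c1 + 4*c1*c2 - 4*c*c3)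
          - 2*b2*(X*c^2 - 4*(c*c2 - c1^2))
          - (2*(n:ℚ[X])+3)*(b1*c^2 + 2*b*c*c1))
          = c * (12*a2*b^2*b1 + 24*a2*b^2*b1*(n:ℚ[X]) + 4*a2^2*b*c - 24*a1*b*b1^2
            - 48*a1*b*b1^2*(n:ℚ[X]) - 4*a1*a2*b1*c - 8*a1^2*b2*c + 2*a*b^3 + 8*a*b^3*(n:ℚ[X])
            + 8*a*b^3*(n:ℚ[X])^2 + 4*a*a1*b*c + 8*a*a1*b*c*(n:ℚ[X]) + 8*a^2*b2*c2
            + 4*a^2*b1*c3 - 4*a^2*b1*c - 2*a^2*b1*c*(n:ℚ[X]) - 4*a^2*b*c4 - 2*a^2*b*c1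
            - 4*a^2*b*c1*(n:ℚ[X]) + 2*X*a1^2*b*c - 2*X*a^2*b2*c - 2*X*a^2*b1*c1
            + 2*X*a^2*b*c2) := by
        linear_combination (8*b^2*b1 + 16*b^2*b1*(n:ℚ[X]) + 4*a2*b*c - 4*a*b1*c1 + 4*a*b*c2) * hh2d
          + (-8*b*b1^2 - 16*b*b1^2*(n:ℚ[X]) - 8*b^2*b2 - 16*b^2*b2*(n:ℚ[X]) - 4*a2*b1*c
            - 8*a1*b2*c - 8*a*b2*c1 + 2*X*b^3 + 4*X*b^3*(n:ℚ[X]) + 2*X*a1*b*c + 2*X*a*b*c1) * h2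
          + (-2*b^3 - 8*b^3*(n:ℚ[X]) - 8*b^3*(n:ℚ[X])^2 - 4*a1*b*c - 8*a1*b*c*(n:ℚ[X])) * h1
      have h10 : c ∣ a^2 * derivative V := by
        rw [hdV]
        exact ⟨_, hc2cert⟩
      exact (hca.pow_right (n := 2)).dvd_of_dvd_mul_left h10
    have hc2V : c^2 ∣ V := by
      obtain ⟨W, hW⟩ := hcV
      have hdW : derivative V = c1*W + c*derivative W := by
        rw [hW]; rw [derivative_mul, ← hc1]
      have h11 : c ∣ c1*W := by
        have h12 := dvd_sub hcdV (dvd_mul_right c (derivative W))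
        rw [hdW] at h12
        simpa using h12
      obtain ⟨W2, hW2⟩ := hcc1.dvd_of_dvd_mul_left h11
      exact ⟨W2, by rw [hW, hW2]; ring⟩
    have hbc2V : b*c^2 ∣ V := (hbc.pow_right (n := 2)).mul_dvd hbV hc2V
    -- degree bookkeeping
    have hTn1 : 1 ≤ T n := by
      have h2T := two_T n
      have : 1*2 ≤ n*(n+1) := Nat.mul_le_mul hn (by omega)
      omega
    have hdegFc : (X*c^2 - 4*(c*c2 - c1^2)).natDegree = 2*T (n+1)+1 := by
      rw [hFc.2, hdc]
    have hcoeffFc : (X*c^2 - 4*(c*c2 - c1^2)).coeff (2*T (n+1)+1) = 1 := by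
      have := hFc.1.coeff_natDegree
      rwa [hdegFc] at this
    have hAle : (c^2 + 2*X*c*c1 + 4*c1*c2 - 4*c*c3).natDegree ≤ 2*T (n+1) := by
      have h13 := natDegree_derivative_le (X*c^2 - 4*(c*c2 - c1^2))
      rw [hdFc, hdegFc] at h13
      omega
    have hb1le : b1.natDegree ≤ T n - 1 := by
      have := natDegree_derivative_le b
      rwa [hdb] at this
    have hC3 : (2*(n:ℚ[X])+3) = C (2*(n:ℚ)+3) := by
      rw [map_add, map_mul, map_ofNat, map_ofNat, C_eq_natCast]
    have hVle : V.natDegree ≤ T n + 2*T (n+1) := by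
      rw [hVdef]
      refine (natDegree_sub_le _ _).trans (max_le ((natDegree_sub_le _ _).trans (max_le ?_ ?_)) ?_)
      · refine natDegree_mul_le.trans ?_
        rw [hdb]
        omega
      · refine natDegree_mul_le.trans ?_
        have hm1 : (2*b1 : ℚ[X]).natDegree ≤ T n - 1 := by
          refine natDegree_mul_le.trans ?_
          simpa using hb1le
        rw [hdegFc]
        omega
      · refine natDegree_mul_le.trans ?_
        have hm2 : ((2*(n:ℚ[X])+3)*b).natDegree ≤ T n := by
          rw [hC3]
          exact (natDegree_C_mul_le _ _).trans (le_of_eq hdb)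
        have hm3 : ((c:ℚ[X])^2).natDegree ≤ 2*T (n+1) := by
          rw [natDegree_pow, hdc]
        omega
    -- coefficient at top degree
    have hbcoeff : b.coeff (T n) = 1 := by
      have := hMb.coeff_natDegree; rwa [hdb] at this
    have hccoeff2 : ((c:ℚ[X])^2).coeff (2*T (n+1)) = 1 := by
      have := (hMc.pow 2).coeff_natDegree
      rwa [natDegree_pow, hdc] at this
    have p1 : (b*(c^2 + 2*X*c*c1 + 4*c1*c2 - 4*c*c3)).coeff (T n + 2*T (n+1))
        = ((2*T (n+1) : ℕ) : ℚ) + 1 := by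
      rw [coeff_mul_add_eq_of_natDegree_le (le_of_eq hdb) hAle, hbcoeff, one_mul, ← hdFc,
        coeff_derivative, hcoeffFc, one_mul]
    have p2 : ((2*b1)*(X*c^2 - 4*(c*c2 - c1^2))).coeff (T n + 2*T (n+1))
        = 2 * (((T n - 1 : ℕ) : ℚ) + 1) := by
      have hidx : T n + 2*T (n+1) = (T n - 1) + (2*T (n+1)+1) := by omega
      have hm1 : (2*b1 : ℚ[X]).natDegree ≤ T n - 1 := by
        refine natDegree_mul_le.trans ?_
        simpa using hb1le
      rw [hidx, coeff_mul_add_eq_of_natDegree_le hm1 (le_of_eq hdegFc), hcoeffFc, mul_one,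
        show (2:ℚ[X]) = C 2 from (map_ofNat C 2).symm, coeff_C_mul, hb1, coeff_derivative,
        show T n - 1 + 1 = T n from by omega, hbcoeff, one_mul]
    have p3 : ((2*(n:ℚ[X])+3)*b*c^2).coeff (T n + 2*T (n+1)) = 2*(n:ℚ)+3 := by
      have hm2 : ((2*(n:ℚ[X])+3)*b).natDegree ≤ T n := by
        rw [hC3]
        exact (natDegree_C_mul_le _ _).trans (le_of_eq hdb)
      rw [coeff_mul_add_eq_of_natDegree_le hm2 (by rw [natDegree_pow, hdc]), hccoeff2, mul_one, hC3,
        coeff_C_mul, hbcoeff, mul_one]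
    have hcoeffV : V.coeff (T n + 2*T (n+1)) = 0 := by
      rw [hVdef, coeff_sub, coeff_sub, p1, p2, p3]
      have q1 : ((T (n+1) : ℕ) : ℚ)*2 = ((n:ℚ)+1)*((n:ℚ)+2) := by
        have := two_T (n+1)
        have : ((2*T (n+1) : ℕ) : ℚ) = (((n+1)*(n+1+1) : ℕ) : ℚ) := by rw [this]
        push_cast at this
        linarith
      have q2 : ((T n : ℕ) : ℚ)*2 = (n:ℚ)*((n:ℚ)+1) := by
        have := two_T n
        have : ((2*T n : ℕ) : ℚ) = ((n*(n+1) : ℕ) : ℚ) := by rw [this]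
        push_cast at this
        linarith
      have q3 : ((T n - 1 : ℕ) : ℚ) = ((T n : ℕ) : ℚ) - 1 := by
        rw [Nat.cast_sub hTn1]; norm_num
      push_cast
      rw [q3]
      linarith [q1, q2]
    -- conclude V = 0
    have hV0 : V = 0 := by
      obtain ⟨q, hq⟩ := hbc2V
      rcases eq_or_ne q 0 with h | h
      · rw [hq, h, mul_zero]
      · exfalso
        have hbc2ne : b*c^2 ≠ 0 := mul_ne_zero hdb_ne (pow_ne_zero 2 hMc.ne_zero)
        have hVne : V ≠ 0 := by rw [hq]; exact mul_ne_zero hbc2ne h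
        have hdm : V.natDegree = (b*c^2).natDegree + q.natDegree := by
          rw [hq, natDegree_mul hbc2ne h]
        have hbc2deg : (b*c^2).natDegree = T n + 2*T (n+1) := by
          rw [natDegree_mul hdb_ne (pow_ne_zero 2 hMc.ne_zero), natDegree_pow, hdb, hdc]
        have hVdeg : V.natDegree = T n + 2*T (n+1) := by omega
        have : V.leadingCoeff = 0 := by
          rw [leadingCoeff, hVdeg]; exact hcoeffV
        exact absurd this (leadingCoeff_ne_zero.mpr hVne)
    -- the new Wronskian relation
    have hd' : derivative d * b + d * b1 = c^2 + 2*X*c*c1 + 4*c1*c2 - 4*c*c3 := by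
      have hder := congrArg derivative hd
      rw [hdFc] at hder
      rw [derivative_mul, ← hb1] at hder
      exact hder
    have hWnew : derivative d * b - d * b1 - (2*(n:ℚ[X])+3)*c^2 = 0 := by
      have e : b * (derivative d * b - d*b1 - (2*(n:ℚ[X])+3)*c^2) = V := by
        rw [hVdef]; linear_combination b*hd' - 2*b1*hd
      have hbz : b * (derivative d * b - d*b1 - (2*(n:ℚ[X])+3)*c^2) = 0 := by rw [e, hV0]
      rcases mul_eq_zero.mp hbz with h | h
      · exact absurd h hdb_ne
      · exact h
    have hcast : ((n+1 : ℕ) : ℚ[X]) = (n:ℚ[X]) + 1 := by push_cast; ring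
    refine ⟨hd, ?_, hbc, hcd, ⟨a, h1.symm⟩, hMc, hMd, hdc, ?_⟩
    · linear_combination hWnew - 2*(c^2)*hcast
    · exact hddeg

lemma YV_monic (n : ℕ) : (YV n).Monic := by
  cases n with
  | zero => exact monic_one
  | succ m => exact (YV_inv (m+1) (by omega)).2.2.2.2.2.1

lemma YV_deg (n : ℕ) : (YV n).natDegree = T n := by
  cases n with
  | zero => simp [show YV 0 = 1 from rfl, T]
  | succ m => exact (YV_inv (m+1) (by omega)).2.2.2.2.2.2.2.1


/-- There exists a sequence of polynomials satisfying the Yablonskii–Vorob'ev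
recurrence (i.e. each a priori rational function `Y_{n+1}` is a polynomial), and any
such sequence satisfies `deg Y_n = n(n+1)/2`. -/
theorem yablonskii_vorobev_exists_and_degree :
    (∃ Y : ℕ → Polynomial ℚ, IsYablonskiiVorobev Y) ∧
      ∀ Y : ℕ → Polynomial ℚ, IsYablonskiiVorobev Y →
        ∀ n : ℕ, (Y n).natDegree = n * (n + 1) / 2 := by
  constructor
  · exact ⟨YV, rfl, rfl, fun n hn => (YV_inv n hn).1⟩
  · intro Y hY n
    have key : ∀ m : ℕ, Y m = YV m ∧ Y (m+1) = YV (m+1) := by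
      intro m
      induction m with
      | zero => exact ⟨hY.1, hY.2.1⟩
      | succ m ih =>
        refine ⟨ih.2, ?_⟩
        have hr := hY.2.2 (m+1) (by omega)
        simp only [Nat.add_sub_cancel] at hr
        rw [ih.1, ih.2] at hr
        have hr2 := (YV_inv (m+1) (by omega)).1
        simp only [Nat.add_sub_cancel] at hr2
        exact mul_right_cancel₀ (YV_monic m).ne_zero (hr.trans hr2.symm)
    rw [(key n).1, YV_deg n]
    rfl
end
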